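/- Under the assumptions of the skew-intersection lemma, with H_{A,B} positive definite factored as P*P, defining L_R = [R; (P⊗R)C] and M_R = [RB; −(P⊗RA)C] for each R in C^{n×n}, one has M_{R'}* L_R = −L_{R'}* M_R for all R, R' in C^{n×n}. -/

import Mathlib

open Matrix Kronecker
open scoped ComplexOrder

lemma kron_conjTranspose {l m n p : Type*} (A : Matrix l m ℂ) (B : Matrix n p ℂ) :
    (A ⊗ₖ B)ᴴ = Aᴴ ⊗ₖ Bᴴ := by
  ext ⟨i, j⟩ ⟨k, l⟩
  simp [conjTranspose_apply, kroneckerMap_apply, star_mul', mul_comm]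

/-- Skew-intersection lemma: with `A` Lyapunov regular, a Hill representation
of `L_{A,B}` with positive definite Hill matrix `H = Pᴴ P` (written with the
stacked block column `bC` of the Hill matrices, so that
`X*B + Bᴴ*X = bCᴴ (H ⊗ (X*A + Aᴴ*X)) bC`), defining
`L_R = [R; (P ⊗ R) bC]` and `M_R = [R B; −(P ⊗ R A) bC]`, one has
`M_{R'}ᴴ L_R = −L_{R'}ᴴ M_R` for all `R, R'`. -/
theorem stmt13 {n m : ℕ} (A B : Matrix (Fin n) (Fin n) ℂ)
    (hreg : ∀ μ ∈ spectrum ℂ A, ∀ ν ∈ spectrum ℂ A, μ + starRingEnd ℂ ν ≠ 0)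
    (H P : Matrix (Fin m) (Fin m) ℂ) (hPD : H.PosDef) (hfac : H = Pᴴ * P)
    (bC : Matrix (Fin m × Fin n) (Fin n) ℂ)
    (hHill : ∀ X : Matrix (Fin n) (Fin n) ℂ,
      X * B + Bᴴ * X = bCᴴ * (H ⊗ₖ (X * A + Aᴴ * X)) * bC) :
    ∀ R R' : Matrix (Fin n) (Fin n) ℂ,
      (Matrix.fromRows (R' * B) (-((P ⊗ₖ (R' * A)) * bC)))ᴴ *
          Matrix.fromRows R ((P ⊗ₖ R) * bC) =
        -((Matrix.fromRows R' ((P ⊗ₖ R') * bC))ᴴ *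
          Matrix.fromRows (R * B) (-((P ⊗ₖ (R * A)) * bC))) := by
  intro R R'
  have key := hHill (R'ᴴ * R)
  rw [conjTranspose_fromRows_eq_fromCols_conjTranspose,
    conjTranspose_fromRows_eq_fromCols_conjTranspose,
    fromCols_mul_fromRows, fromCols_mul_fromRows]
  simp only [conjTranspose_neg, conjTranspose_mul, kron_conjTranspose,
    conjTranspose_conjTranspose, Matrix.neg_mul, Matrix.mul_neg, neg_neg, Matrix.mul_assoc]
  have h1 : (Pᴴ ⊗ₖ (Aᴴ * R'ᴴ)) * ((P ⊗ₖ R) * bC)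
      = (H ⊗ₖ (Aᴴ * (R'ᴴ * R))) * bC := by
    rw [← Matrix.mul_assoc, ← mul_kronecker_mul, ← hfac, Matrix.mul_assoc Aᴴ]
  have h2 : (Pᴴ ⊗ₖ R'ᴴ) * ((P ⊗ₖ (R * A)) * bC)
      = (H ⊗ₖ (R'ᴴ * (R * A))) * bC := by
    rw [← Matrix.mul_assoc, ← mul_kronecker_mul, ← hfac]
  rw [h1, h2]
  have key' : bCᴴ * ((H ⊗ₖ (R'ᴴ * (R * A))) * bC) + bCᴴ * ((H ⊗ₖ (Aᴴ * (R'ᴴ * R))) * bC)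
      = R'ᴴ * R * B + Bᴴ * (R'ᴴ * R) := by
    rw [key, kronecker_add, Matrix.mul_add, Matrix.add_mul, Matrix.mul_assoc R'ᴴ R A]
    simp only [Matrix.mul_assoc]
  linear_combination (norm := noncomm_ring) -key'
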